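/- Let G = ⟨x, y | x^p = y^m = 1, x^{-1} y x = y^r⟩ where p is the smallest prime divisor of |G| and gcd(p(r-1), m) = 1. Then every sequence of length m + p - 1 over G contains a nonempty subsequence whose elements can be ordered so that their product equals 1. Equivalently, d(G) ≤ m + p - 2. -/

import Mathlib

/-- The set of products of a sequence (multiset) `S` over all orderings. -/
def piSet {G : Type*} [Group G] (S : Multiset G) : Set G :=
  {g | ∃ l : List G, (l : Multiset G) = S ∧ l.prod = g}

/-- The set `Π(S)` of all products of nonempty subsequences of `S`. -/
def subProds {G : Type*} [Group G] (S : Multiset G) : Set G :=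
  {g | ∃ T : Multiset G, T ≤ S ∧ T ≠ 0 ∧ g ∈ piSet T}

/-- The small Davenport constant: the maximal length of a product-one free sequence. -/
noncomputable def dG (G : Type*) [Group G] : ℕ :=
  sSup {n | ∃ S : Multiset G, Multiset.card S = n ∧ (1 : G) ∉ subProds S}
set_option linter.unusedSectionVars false
namespace S9
open scoped Pointwise
variable {p : ℕ} {G : Type*} [Group G]

def psum (φ : G → ZMod p) (l : List G) (k : ℕ) : ZMod p := ((l.take k).map φ).sum
def PSset (φ : G → ZMod p) (l : List G) : Finset (ZMod p) :=
  (Finset.range l.length).image (psum φ l)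

lemma psum_zero (φ : G → ZMod p) (l : List G) : psum φ l 0 = 0 := by simp [psum]
lemma psum_append_left (φ : G → ZMod p) (l₁ l₂ : List G) {j : ℕ} (hj : j ≤ l₁.length) :
    psum φ (l₁ ++ l₂) j = psum φ l₁ j := by
  simp [psum, List.take_append, Nat.sub_eq_zero_of_le hj]
lemma psum_take_add (φ : G → ZMod p) (l : List G) (k j : ℕ) :
    psum φ l (k + j) = psum φ l k + psum φ (l.drop k) j := by
  simp [psum, List.take_add]
lemma segment_sum (φ : G → ZMod p) (l : List G) (i j : ℕ) (hij : i ≤ j) :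
    psum φ l i + (((l.drop i).take (j - i)).map φ).sum = psum φ l j := by
  have h := psum_take_add φ l i (j - i)
  rw [Nat.add_sub_cancel' hij] at h
  rw [h]; rfl

lemma psum_length (φ : G → ZMod p) (l : List G) : psum φ l l.length = (l.map φ).sum := by
  simp [psum]

lemma PSset_append_left (φ : G → ZMod p) (l₁ l₂ : List G) :
    PSset φ l₁ ⊆ PSset φ (l₁ ++ l₂) := by
  intro c hc
  rcases Finset.mem_image.1 hc with ⟨j, hj, rfl⟩
  rw [Finset.mem_range] at hj
  refine Finset.mem_image.2 ⟨j, ?_, psum_append_left φ l₁ l₂ hj.le⟩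
  simp only [Finset.mem_range, List.length_append]
  omega

section TokDef
variable (φ : G → ZMod p) (y : G) (dm : ℕ)

structure Tok where
  l : List G
  V : ℕ
  hne : l ≠ []
  hsum : (l.map φ).sum = 0
  hprod : l.prod = y ^ (dm * V)

end TokDef

variable {φ : G → ZMod p} {y : G} {dm : ℕ}

def Tok.w (t : Tok φ y dm) : ℕ := (PSset φ t.l).card

lemma Tok.w_pos (t : Tok φ y dm) : 1 ≤ t.w := by
  refine Finset.card_pos.2 ⟨0, Finset.mem_image.2 ⟨0, ?_, psum_zero φ t.l⟩⟩
  simpa [Finset.mem_range] using List.length_pos_iff.2 t.hne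

section Hphi
variable (hφ : ∀ g h : G, φ (g * h) = φ g + φ h)
include hφ

lemma phi_one : φ 1 = 0 := by
  have := hφ 1 1; simp only [mul_one] at this
  have h2 : φ 1 + 0 = φ 1 + φ 1 := by rw [add_zero]; exact this
  exact ((add_right_injective _) h2).symm

lemma phi_prod (l : List G) : φ l.prod = (l.map φ).sum := by
  induction l with
  | nil => simpa using phi_one hφ
  | cons a l ih => simp [hφ, ih]

end Hphi

/-- Rotation of a token by an element of its prefix-sum set. -/
lemma rot_tok (hφ : ∀ g h : G, φ (g * h) = φ g + φ h) {r : ℕ}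
    (hconj : ∀ (g : G) (a : ℕ), g⁻¹ * y ^ a * g = y ^ (a * r ^ (φ g).val))
    (t : Tok φ y dm) {c : ZMod p} (hc : c ∈ PSset φ t.l) :
    ∃ t' : Tok φ y dm, t'.V = t.V * r ^ c.val ∧ (t'.l : Multiset G) = (t.l : Multiset G)
      ∧ t.w ≤ t'.w := by
  classical
  obtain ⟨k, hk, hck⟩ := Finset.mem_image.1 hc
  rw [Finset.mem_range] at hk
  set l := t.l with hl
  set tk := l.take k with htk
  set dr := l.drop k with hdr
  have htd : tk ++ dr = l := List.take_append_drop k l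
  have hφtk : φ tk.prod = c := by
    rw [phi_prod hφ]; exact hck
  have hprod' : (dr ++ tk).prod = y ^ (dm * (t.V * r ^ c.val)) := by
    have h1 : l.prod = tk.prod * dr.prod := by rw [← htd]; exact List.prod_append
    have h2 : dr.prod = tk.prod⁻¹ * l.prod := by rw [h1]; group
    have : (dr ++ tk).prod = tk.prod⁻¹ * l.prod * tk.prod := by
      rw [List.prod_append, h2]
    rw [this, t.hprod, hconj tk.prod (dm * t.V), hφtk, mul_assoc]
  have hlen : (dr ++ tk).length = l.length := by
    rw [List.length_append]; simp [htk, hdr]; omega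
  have hsum' : ((dr ++ tk).map φ).sum = 0 := by
    have : ((dr ++ tk).map φ).sum = ((tk ++ dr).map φ).sum := by
      simp [List.map_append, add_comm]
    rw [this, htd, t.hsum]
  have hne' : dr ++ tk ≠ [] := by
    intro h
    have := List.length_pos_iff.2 t.hne
    rw [← hlen] at this; simp [h] at this
  have hperm : List.Perm (dr ++ tk) l := htd ▸ List.perm_append_comm
  refine ⟨⟨dr ++ tk, t.V * r ^ c.val, hne', hsum', hprod'⟩, rfl, Multiset.coe_eq_coe.2 hperm, ?_⟩
  · -- weight: PSset l shifted by c sits inside PSset (dr ++ tk)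
    show (PSset φ l).card ≤ (PSset φ (dr ++ tk)).card
    have hsub : (PSset φ l).image (fun z => z - c) ⊆ PSset φ (dr ++ tk) := by
      intro z hz
      rcases Finset.mem_image.1 hz with ⟨w, hw, rfl⟩
      rcases Finset.mem_image.1 hw with ⟨i, hi, rfl⟩
      rw [Finset.mem_range] at hi
      by_cases hik : k ≤ i
      · refine Finset.mem_image.2 ⟨i - k, ?_, ?_⟩
        · rw [Finset.mem_range, hlen]; omega
        · have h1 : psum φ (dr ++ tk) (i - k) = psum φ dr (i - k) := by
            apply psum_append_left
            simp [hdr]; omega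
          have h2 : psum φ l i = psum φ l k + psum φ dr (i - k) := by
            have := psum_take_add φ l k (i - k)
            rw [Nat.add_sub_cancel' hik] at this
            exact this
          rw [h1, h2, hck]; ring
      · push_neg at hik
        refine Finset.mem_image.2 ⟨dr.length + i, ?_, ?_⟩
        · rw [Finset.mem_range, hlen]
          have : dr.length = l.length - k := by simp [hdr]
          omega
        · have h1 : psum φ (dr ++ tk) (dr.length + i) = (dr.map φ).sum + psum φ tk i := by
            simp only [psum, List.take_append]
            simp [List.take_of_length_le (by simp : (dr.map φ).length ≤ dr.length + i)]
          have h2 : psum φ tk i = psum φ l i := by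
            have : psum φ l i = psum φ (tk ++ dr) i := by rw [htd]
            rw [this, psum_append_left φ tk dr (by simp [htk]; omega)]
          have h3 : (tk.map φ).sum + (dr.map φ).sum = 0 := by
            have : ((tk ++ dr).map φ).sum = 0 := by rw [htd]; exact t.hsum
            simpa using this
          have h4 : (tk.map φ).sum = c := hck
          rw [h1, h2]
          have : (dr.map φ).sum = -c := by linear_combination h3 - h4
          rw [this]; ring
    calc (PSset φ l).card = ((PSset φ l).image (fun z => z - c)).card := by
          rw [Finset.card_image_of_injective _ (sub_left_injective)]
      _ ≤ _ := Finset.card_le_card hsub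

def msuml (ts : List (Tok φ y dm)) : Multiset G := (ts.map fun t => (t.l : Multiset G)).sum
def wsuml (ts : List (Tok φ y dm)) : ℕ := (ts.map Tok.w).sum
def msum (ts : Multiset (Tok φ y dm)) : Multiset G := (ts.map fun t => (t.l : Multiset G)).sum
def wsum (ts : Multiset (Tok φ y dm)) : ℕ := (ts.map Tok.w).sum

lemma msum_coe (ts : List (Tok φ y dm)) : msum (ts : Multiset (Tok φ y dm)) = msuml ts := rfl
lemma wsum_coe (ts : List (Tok φ y dm)) : wsum (ts : Multiset (Tok φ y dm)) = wsuml ts := rfl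

/-- Concatenate a nonempty list of tokens into one token whose weight dominates the head. -/
lemma concat_toks (hφ : ∀ g h : G, φ (g * h) = φ g + φ h) :
    ∀ (h : Tok φ y dm) (ts : List (Tok φ y dm)),
    ∃ t : Tok φ y dm, t.V = h.V + (ts.map Tok.V).sum ∧
      (t.l : Multiset G) = (h.l : Multiset G) + msuml ts ∧ h.w ≤ t.w := by
  intro h ts
  induction ts generalizing h with
  | nil => exact ⟨h, by simp, by simp [msuml], le_rfl⟩
  | cons a ts ih =>
    obtain ⟨t', h1, h2, h3⟩ := ih a
    have hne' : h.l ++ t'.l ≠ [] := by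
      intro hemp; exact h.hne (List.append_eq_nil_iff.1 hemp).1
    have hsum' : ((h.l ++ t'.l).map φ).sum = 0 := by
      simp [List.map_append, h.hsum, t'.hsum]
    have hprod' : (h.l ++ t'.l).prod = y ^ (dm * (h.V + (a.V + (ts.map Tok.V).sum))) := by
      rw [List.prod_append, h.hprod, t'.hprod, ← pow_add, h1]
      ring_nf
    refine ⟨⟨h.l ++ t'.l, _, hne', hsum', hprod'⟩, rfl, ?_, ?_⟩
    · show ((h.l ++ t'.l : List G) : Multiset G) = _
      rw [← Multiset.coe_add, h2, msuml]
      simp [msuml]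
    · show h.w ≤ (PSset φ (h.l ++ t'.l)).card
      exact Finset.card_le_card (PSset_append_left φ h.l t'.l)

/-- Greedy window selection. -/
lemma window (W target : ℕ) (hW1 : 1 ≤ W) :
    ∀ L : List (Tok φ y dm), (∀ t ∈ L, Tok.w t ≤ W) → target ≤ wsuml L →
    ∃ win : List (Tok φ y dm), List.Sublist win L ∧ target ≤ wsuml win ∧ wsuml win < target + W := by
  intro L
  induction L generalizing target with
  | nil =>
    intro _ htar
    refine ⟨[], List.Sublist.refl _, ?_, ?_⟩ <;> simp [wsuml] at htar ⊢ <;> omega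
  | cons a L ih =>
    intro hWmem htar
    by_cases h0 : target = 0
    · exact ⟨[], (List.nil_sublist _), by omega, by simp [wsuml]; omega⟩
    by_cases ha : target ≤ a.w
    · refine ⟨[a], by simp, by simpa [wsuml], ?_⟩
      have := hWmem a (by simp)
      simp [wsuml]; omega
    · push_neg at ha
      have h1 : target - a.w ≤ wsuml L := by
        simp [wsuml] at htar ⊢; omega
      obtain ⟨win, hs, h2, h3⟩ := ih (target - a.w) (fun t ht => hWmem t (by simp [ht])) h1
      refine ⟨a :: win, hs.cons_cons a, ?_, ?_⟩ <;> simp [wsuml] at h2 h3 ⊢ <;> omega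

section CD
variable {q r : ℕ}

/-- image of a token in `ZMod q`. -/
def Bset (q r : ℕ) (t : Tok φ y dm) : Finset (ZMod q) :=
  (PSset φ t.l).image (fun c => (t.V : ZMod q) * (r : ZMod q) ^ c.val)

lemma Bset_nonempty (t : Tok φ y dm) : (Bset q r t).Nonempty := by
  refine Finset.Nonempty.image ?_ _
  refine Finset.card_pos.1 ?_
  exact t.w_pos

lemma card_Bset [Fact q.Prime] (t : Tok φ y dm)
    (hlive : (t.V : ZMod q) ≠ 0)
    (hd : ∀ c c' : ZMod p, c ≠ c' → ((r : ZMod q)) ^ c.val ≠ ((r : ZMod q)) ^ c'.val) :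
    (Bset q r t).card = t.w := by
  refine Finset.card_image_of_injOn ?_
  intro c _ c' _ hcc
  by_contra hne
  exact hd c c' hne (mul_left_cancel₀ hlive hcc)

lemma zero_not_mem_Bset [Fact q.Prime] (t : Tok φ y dm)
    (hlive : (t.V : ZMod q) ≠ 0) (hr0 : (r : ZMod q) ≠ 0) :
    (0 : ZMod q) ∉ Bset q r t := by
  intro h
  rcases Finset.mem_image.1 h with ⟨c, _, hc⟩
  exact (mul_ne_zero hlive (pow_ne_zero _ hr0)) hc

lemma foldr_nonempty (Bs : List (Finset (ZMod q))) (A₀ : Finset (ZMod q)) (h₀ : A₀.Nonempty) :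
    (Bs.foldr (fun B acc => insert (0:ZMod q) B + acc) A₀).Nonempty := by
  induction Bs with
  | nil => exact h₀
  | cons B Bs ih => exact Finset.Nonempty.add (Finset.insert_nonempty _ _) ih

lemma CD_card (hq : q.Prime) (A₀ : Finset (ZMod q)) (h₀ : A₀.Nonempty)
    (Bs : List (Finset (ZMod q))) (h0 : ∀ B ∈ Bs, (0 : ZMod q) ∉ B) :
    min q (A₀.card + (Bs.map Finset.card).sum) ≤
      (Bs.foldr (fun B acc => insert (0:ZMod q) B + acc) A₀).card := by
  induction Bs with
  | nil => simpa using min_le_right _ _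
  | cons B Bs ih =>
    have h0B : (0 : ZMod q) ∉ B := h0 B (by simp)
    have ih' := ih (fun B hB => h0 B (by simp [hB]))
    have hF : (Bs.foldr (fun B acc => insert (0:ZMod q) B + acc) A₀).Nonempty :=
      foldr_nonempty Bs A₀ h₀
    have hcd := ZMod.cauchy_davenport hq (Finset.insert_nonempty (0:ZMod q) B) hF
    have hins : (insert (0:ZMod q) B).card = B.card + 1 := Finset.card_insert_of_notMem h0B
    rw [hins] at hcd
    simp only [List.foldr_cons, List.map_cons, List.sum_cons]
    rcases le_or_gt q (A₀.card + (Bs.map Finset.card).sum) with hc | hc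
    · have h1 : q ≤ (Bs.foldr (fun B acc => insert (0:ZMod q) B + acc) A₀).card := by
        rw [min_eq_left hc] at ih'; exact ih'
      refine le_trans (min_le_left _ _) (le_trans ?_ hcd)
      rw [le_min_iff]; constructor
      · exact le_refl q
      · omega
    · have h1 : A₀.card + (Bs.map Finset.card).sum ≤
          (Bs.foldr (fun B acc => insert (0:ZMod q) B + acc) A₀).card := by
        rw [min_eq_right hc.le] at ih'; exact ih'
      refine le_trans ?_ hcd
      rw [min_le_iff] at *
      omega

lemma cast_sum_mul (q r : ℕ) (sel : List (Tok φ y dm × ZMod p)) :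
    (((sel.map fun pr => pr.1.V * r ^ pr.2.val).sum : ℕ) : ZMod q)
      = (sel.map fun pr => ((pr.1.V : ZMod q) * (r : ZMod q) ^ pr.2.val)).sum := by
  induction sel with
  | nil => simp
  | cons a sel ih =>
    simp only [List.map_cons, List.sum_cons, Nat.cast_add, ih]
    congr 1
    push_cast
    ring

lemma extract_mem (ws : List (Tok φ y dm)) (A₀ : Finset (ZMod q)) (z : ZMod q)
    (hz : z ∈ ws.foldr (fun t acc => insert (0:ZMod q) (Bset q r t) + acc) A₀) :
    ∃ (sel : List (Tok φ y dm × ZMod p)) (a : ZMod q), a ∈ A₀ ∧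
      List.Sublist (sel.map Prod.fst) ws ∧ (∀ pr ∈ sel, pr.2 ∈ PSset φ pr.1.l) ∧
      a + (sel.map fun pr => ((pr.1.V : ZMod q) * (r : ZMod q) ^ pr.2.val)).sum = z := by
  induction ws generalizing z with
  | nil => exact ⟨[], z, hz, by simp, by simp, by simp⟩
  | cons t ws ih =>
    simp only [List.foldr_cons] at hz
    rw [Finset.mem_add] at hz
    obtain ⟨u, hu, v, hv, huv⟩ := hz
    obtain ⟨sel, a, ha, hsub, hmem, hsum⟩ := ih v hv
    rcases Finset.mem_insert.1 hu with h0 | hB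
    · exact ⟨sel, a, ha, hsub.trans (List.sublist_cons_self t ws), hmem, by
        rw [hsum, ← huv, h0, zero_add]⟩
    · rcases Finset.mem_image.1 hB with ⟨c, hc, hcu⟩
      refine ⟨(t, c) :: sel, a, ha, ?_, ?_, ?_⟩
      · simpa using hsub.cons_cons t
      · intro pr hpr
        rcases List.mem_cons.1 hpr with h | h
        · subst h; exact hc
        · exact hmem pr h
      · simp only [List.map_cons, List.sum_cons, hcu]
        rw [← huv, ← hsum]; ring

end CD

lemma msum_add (s t : Multiset (Tok φ y dm)) : msum (s + t) = msum s + msum t := by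
  simp [msum]
lemma wsum_add (s t : Multiset (Tok φ y dm)) : wsum (s + t) = wsum s + wsum t := by
  simp [wsum]
lemma msum_cons (a : Tok φ y dm) (s : Multiset (Tok φ y dm)) :
    msum (a ::ₘ s) = (a.l : Multiset G) + msum s := by simp [msum]
lemma wsum_cons (a : Tok φ y dm) (s : Multiset (Tok φ y dm)) :
    wsum (a ::ₘ s) = a.w + wsum s := by simp [wsum]

lemma sum_mono_multiset {α : Type*} (s t : Multiset (Multiset α)) (h : s ≤ t) : s.sum ≤ t.sum := by
  obtain ⟨u, rfl⟩ := Multiset.le_iff_exists_add.1 h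
  simp

lemma msum_mono {s t : Multiset (Tok φ y dm)} (h : s ≤ t) : msum s ≤ msum t :=
  sum_mono_multiset _ _ (Multiset.map_le_map h)

lemma exists_max (s : Multiset (Tok φ y dm)) (hs : s ≠ 0) :
    ∃ t₀ ∈ s, ∀ t ∈ s, Tok.w t ≤ t₀.w := by
  induction s using Multiset.induction with
  | empty => exact absurd rfl hs
  | cons a s ih =>
    rcases eq_or_ne s 0 with rfl | hs0
    · exact ⟨a, by simp, by simp⟩
    · obtain ⟨t₀, ht₀, hmax⟩ := ih hs0
      rcases le_or_gt t₀.w a.w with h | h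
      · refine ⟨a, by simp, ?_⟩
        intro t ht
        rcases Multiset.mem_cons.1 ht with rfl | ht
        · exact le_rfl
        · exact le_trans (hmax t ht) h
      · refine ⟨t₀, by simp [ht₀], ?_⟩
        intro t ht
        rcases Multiset.mem_cons.1 ht with rfl | ht
        · exact h.le
        · exact hmax t ht

lemma add_le_mul_succ {a b : ℕ} (ha : 1 ≤ a) (hb : 1 ≤ b) : a + b ≤ a * b + 1 := by
  rcases Nat.exists_eq_add_of_le ha with ⟨a', rfl⟩
  rcases Nat.exists_eq_add_of_le hb with ⟨b', rfl⟩
  ring_nf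
  nlinarith

section Merge
variable {r : ℕ}

lemma rots_sel (hφ : ∀ g h : G, φ (g * h) = φ g + φ h)
    (hconj : ∀ (g : G) (a : ℕ), g⁻¹ * y ^ a * g = y ^ (a * r ^ (φ g).val)) :
    ∀ (sel : List (Tok φ y dm × ZMod p)) (_ : ∀ pr ∈ sel, pr.2 ∈ PSset φ pr.1.l),
    ∃ ts : List (Tok φ y dm),
      ts.map Tok.V = sel.map (fun pr => pr.1.V * r ^ pr.2.val) ∧
      msuml ts = msuml (sel.map Prod.fst) := by
  intro sel
  induction sel with
  | nil => exact fun _ => ⟨[], by simp, by simp⟩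
  | cons pr sel ih =>
    intro hmem
    obtain ⟨ts, h1, h2⟩ := ih (fun x hx => hmem x (by simp [hx]))
    obtain ⟨t', hV, hM, _⟩ := rot_tok hφ hconj pr.1 (hmem pr (by simp))
    refine ⟨t' :: ts, by simp [hV, h1], ?_⟩
    simp only [msuml, List.map_cons, List.sum_cons, List.map_map] at h2 ⊢
    rw [hM, h2]

lemma merge_sel (hφ : ∀ g h : G, φ (g * h) = φ g + φ h)
    (hconj : ∀ (g : G) (a : ℕ), g⁻¹ * y ^ a * g = y ^ (a * r ^ (φ g).val))
    (t₀ : Tok φ y dm) {c₀ : ZMod p} (h₀ : c₀ ∈ PSset φ t₀.l)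
    (sel : List (Tok φ y dm × ZMod p)) (hmem : ∀ pr ∈ sel, pr.2 ∈ PSset φ pr.1.l) :
    ∃ T : Tok φ y dm,
      T.V = t₀.V * r ^ c₀.val + (sel.map fun pr => pr.1.V * r ^ pr.2.val).sum ∧
      (T.l : Multiset G) = (t₀.l : Multiset G) + msuml (sel.map Prod.fst) ∧ t₀.w ≤ T.w := by
  obtain ⟨t₀', hV₀, hM₀, hw₀⟩ := rot_tok hφ hconj t₀ h₀
  obtain ⟨ts, h1, h2⟩ := rots_sel hφ hconj sel hmem
  obtain ⟨T, hTV, hTM, hTw⟩ := concat_toks hφ t₀' ts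
  refine ⟨T, ?_, ?_, le_trans hw₀ hTw⟩
  · rw [hTV, hV₀, h1]
  · rw [hTM, hM₀, h2]

end Merge

section Phase
variable {q r : ℕ}

lemma phase [Fact q.Prime] (hq2 : 2 ≤ q)
    (hφ : ∀ g h : G, φ (g * h) = φ g + φ h)
    (hconj : ∀ (g : G) (a : ℕ), g⁻¹ * y ^ a * g = y ^ (a * r ^ (φ g).val))
    (hd : ∀ c c' : ZMod p, c ≠ c' → ((r : ZMod q)) ^ c.val ≠ ((r : ZMod q)) ^ c'.val)
    (hr0 : (r : ZMod q) ≠ 0) :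
    ∀ (N : ℕ) (pool : Multiset (Tok φ y dm)), Multiset.card pool ≤ N →
      (∀ t ∈ pool, (t.V : ZMod q) ≠ 0) →
      ∃ out : Multiset (Tok φ y dm), (∀ t ∈ out, (t.V : ZMod q) = 0) ∧
        msum out ≤ msum pool ∧ wsum pool ≤ q * wsum out + (q - 1) := by
  classical
  intro N
  induction N with
  | zero =>
    intro pool hcard _
    have : pool = 0 := by
      rw [← Multiset.card_eq_zero]; omega
    subst this
    refine ⟨0, by simp, by simp, ?_⟩
    rw [show wsum (0 : Multiset (Tok φ y dm)) = 0 from rfl]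
    omega
  | succ N ih =>
    intro pool hcard hlive
    by_cases hsmall : wsum pool ≤ q - 1
    · refine ⟨0, by simp, by
        rw [show msum (0 : Multiset (Tok φ y dm)) = 0 from rfl]; exact Multiset.zero_le _, ?_⟩
      rw [show wsum (0 : Multiset (Tok φ y dm)) = 0 from rfl]
      omega
    push_neg at hsmall
    have hwq : q ≤ wsum pool := by omega
    have hpool0 : pool ≠ 0 := by
      intro h; rw [h] at hwq; simp [wsum] at hwq; omega
    obtain ⟨t₀, ht₀, hmax⟩ := exists_max pool hpool0
    set rest := pool.erase t₀ with hrest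
    have hpe : t₀ ::ₘ rest = pool := Multiset.cons_erase ht₀
    have hwpool : wsum pool = t₀.w + wsum rest := by rw [← hpe, wsum_cons]
    have hrestmem : ∀ t ∈ rest, Tok.w t ≤ t₀.w := by
      intro t ht
      exact hmax t (Multiset.mem_of_le (Multiset.erase_le _ _) ht)
    have htar : (q - t₀.w) ≤ wsuml rest.toList := by
      have : wsuml rest.toList = wsum rest := by
        rw [← wsum_coe]; congr 1; exact Multiset.coe_toList rest
      omega
    obtain ⟨win, hwin_sub, hwin_ge, hwin_lt⟩ :=
      window t₀.w (q - t₀.w) t₀.w_pos rest.toList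
        (fun t ht => hrestmem t (by rwa [← Multiset.mem_toList])) htar
    -- all window tokens are live
    have hwin_mem : ∀ t ∈ win, t ∈ pool := by
      intro t ht
      have : t ∈ rest.toList := hwin_sub.mem ht
      rw [Multiset.mem_toList] at this
      exact Multiset.mem_of_le (Multiset.erase_le _ _) this
    have hwin_live : ∀ t ∈ win, (t.V : ZMod q) ≠ 0 := fun t ht => hlive t (hwin_mem t ht)
    -- CD : the full sum-set covers everything
    have hcardB : ∀ t ∈ win, (Bset q r t).card = t.w := by
      intro t ht; exact card_Bset t (hwin_live t ht) hd
    have hA₀ : (Bset q r t₀).card = t₀.w := card_Bset t₀ (hlive t₀ ht₀) hd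
    have htotal : q ≤ (Bset q r t₀).card + ((win.map (fun t => Bset q r t)).map Finset.card).sum := by
      have : ((win.map (fun t => Bset q r t)).map Finset.card).sum = wsuml win := by
        rw [List.map_map]
        unfold wsuml
        congr 1
        apply List.map_congr_left
        intro t ht; exact hcardB t ht
      rw [this, hA₀]
      omega
    have hcd := CD_card (Fact.out : q.Prime) (Bset q r t₀) (Bset_nonempty t₀)
      (win.map (fun t => Bset q r t))
      (by
        intro B hB
        rcases List.mem_map.1 hB with ⟨t, ht, rfl⟩
        exact zero_not_mem_Bset t (hwin_live t ht) hr0)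
    rw [min_eq_left htotal] at hcd
    have hNeZero : NeZero q := ⟨by omega⟩
    have huniv : (List.foldr (fun B acc => insert (0:ZMod q) B + acc) (Bset q r t₀)
        (win.map (fun t => Bset q r t))) = Finset.univ := by
      apply Finset.eq_univ_of_card
      have hle := Finset.card_le_univ (List.foldr (fun B acc => insert (0:ZMod q) B + acc)
        (Bset q r t₀) (win.map (fun t => Bset q r t)))
      have hcu : Fintype.card (ZMod q) = q := ZMod.card q
      omega
    have h0mem : (0 : ZMod q) ∈ List.foldr (fun B acc => insert (0:ZMod q) B + acc)
        (Bset q r t₀) (win.map (fun t => Bset q r t)) := by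
      rw [huniv]; exact Finset.mem_univ 0
    -- rewrite foldr over mapped list as foldr over tokens
    have hfold : List.foldr (fun B acc => insert (0:ZMod q) B + acc) (Bset q r t₀)
        (win.map (fun t => Bset q r t)) =
        List.foldr (fun t acc => insert (0:ZMod q) (Bset q r t) + acc) (Bset q r t₀) win := by
      rw [List.foldr_map]
    rw [hfold] at h0mem
    obtain ⟨sel, a, ha, hselsub, hselmem, hselsum⟩ := extract_mem win (Bset q r t₀) 0 h0mem
    rcases Finset.mem_image.1 ha with ⟨c₀, hc₀, hac₀⟩
    obtain ⟨T, hTV, hTM, hTw⟩ := merge_sel hφ hconj t₀ hc₀ sel hselmem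
    have hcast := cast_sum_mul (φ := φ) (y := y) (dm := dm) q r sel
    have hTdead : (T.V : ZMod q) = 0 := by
      have h1 : ((t₀.V * r ^ c₀.val : ℕ) : ZMod q) = a := by push_cast; exact hac₀
      rw [hTV, Nat.cast_add, h1, hcast]
      exact hselsum
    -- the remaining pool
    have hwinle : (win : Multiset (Tok φ y dm)) ≤ rest := by
      have h1 : (win : Multiset (Tok φ y dm)) ≤ (rest.toList : Multiset (Tok φ y dm)) :=
        hwin_sub.subperm
      rwa [Multiset.coe_toList] at h1
    set pool' := rest - (win : Multiset (Tok φ y dm)) with hpool'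
    have hrest_eq : (win : Multiset (Tok φ y dm)) + pool' = rest := by
      rw [hpool', add_comm]
      exact tsub_add_cancel_of_le hwinle
    have hcard' : Multiset.card pool' ≤ N := by
      have h1 : Multiset.card pool = Multiset.card rest + 1 := by
        rw [← hpe]; simp
      have h2 : Multiset.card rest = win.length + Multiset.card pool' := by
        rw [← hrest_eq]; simp
      omega
    have hlive' : ∀ t ∈ pool', (t.V : ZMod q) ≠ 0 := by
      intro t ht
      refine hlive t ?_
      refine Multiset.mem_of_le (le_trans ?_ (Multiset.erase_le t₀ pool)) ht
      exact tsub_le_self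
    obtain ⟨out', hout'_dead, hout'_m, hout'_w⟩ := ih pool' hcard' hlive'
    refine ⟨T ::ₘ out', ?_, ?_, ?_⟩
    · intro t ht
      rcases Multiset.mem_cons.1 ht with rfl | ht
      · exact hTdead
      · exact hout'_dead t ht
    · rw [msum_cons, ← hpe, msum_cons]
      have h1 : msuml (sel.map Prod.fst) ≤ msum (win : Multiset (Tok φ y dm)) := by
        rw [← msum_coe]
        exact msum_mono hselsub.subperm
      have h2 : msum rest = msum (win : Multiset (Tok φ y dm)) + msum pool' := by
        rw [← hrest_eq, msum_add]
      rw [hTM, h2]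
      calc (t₀.l : Multiset G) + msuml (sel.map Prod.fst) + msum out'
          ≤ (t₀.l : Multiset G) + msuml (sel.map Prod.fst) + msum pool' := by
            exact add_le_add_right hout'_m _
        _ ≤ (t₀.l : Multiset G) + (msum (win : Multiset (Tok φ y dm)) + msum pool') := by
            rw [add_assoc]
            refine add_le_add_right (add_le_add_left h1 _) _
    · rw [wsum_cons]
      have hw' : wsum pool = t₀.w + (wsuml win + wsum pool') := by
        rw [hwpool, ← hrest_eq, wsum_add, wsum_coe]
      have hP1 : q + t₀.w ≤ q * t₀.w + 1 := add_le_mul_succ (by omega) t₀.w_pos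
      have hP2 : 2 * t₀.w ≤ q * t₀.w := Nat.mul_le_mul_right _ hq2
      have hP3 : q * t₀.w ≤ q * T.w := Nat.mul_le_mul_left _ hTw
      have hmul : q * (T.w + wsum out') = q * T.w + q * wsum out' := Nat.mul_add q _ _
      omega
end Phase

section Core
variable {r m : ℕ}

lemma le_msum_of_mem {toks : Multiset (Tok φ y dm)} {t : Tok φ y dm} (ht : t ∈ toks) :
    (t.l : Multiset G) ≤ msum toks := by
  classical
  have h1 : t ::ₘ toks.erase t = toks := Multiset.cons_erase ht
  rw [← h1, msum_cons]
  exact self_le_add_right _ _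

/-- Descend a token with `q ∣ V` to the next level. -/
def desc (q : ℕ) (hq : 0 < q) (t : Tok φ y dm) (h : q ∣ t.V) : Tok φ y (dm * q) :=
  ⟨t.l, t.V / q, t.hne, t.hsum, by
    rw [t.hprod]
    congr 1
    rw [mul_assoc, Nat.mul_div_cancel' h]⟩

lemma descM (q : ℕ) (hq : 0 < q) (toks : Multiset (Tok φ y dm))
    (h : ∀ t ∈ toks, q ∣ t.V) :
    ∃ toks' : Multiset (Tok φ y (dm * q)), msum toks' = msum toks ∧ wsum toks' = wsum toks := by
  refine ⟨toks.attach.map (fun tt => desc q hq tt.1 (h tt.1 tt.2)), ?_, ?_⟩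
  · unfold msum
    rw [Multiset.map_map]
    have : ((fun t => ((t.l : Multiset G))) ∘ (fun tt : {x // x ∈ toks} => desc q hq tt.1 (h tt.1 tt.2)))
        = (fun tt : {x // x ∈ toks} => ((tt.1.l : Multiset G))) := rfl
    rw [this]
    conv_rhs => rw [← Multiset.attach_map_val toks, Multiset.map_map]
    rfl
  · unfold wsum
    rw [Multiset.map_map]
    have : (Tok.w ∘ (fun tt : {x // x ∈ toks} => desc q hq tt.1 (h tt.1 tt.2)))
        = (fun tt : {x // x ∈ toks} => tt.1.w) := rfl
    rw [this]
    conv_rhs => rw [← Multiset.attach_map_val toks, Multiset.map_map]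
    rfl

theorem core (hm : 0 < m) (hoy : orderOf y = m)
    (hφ : ∀ g h : G, φ (g * h) = φ g + φ h)
    (hconj : ∀ (g : G) (a : ℕ), g⁻¹ * y ^ a * g = y ^ (a * r ^ (φ g).val))
    (hdist : ∀ q : ℕ, q.Prime → q ∣ m → ∀ c c' : ZMod p, c ≠ c' →
        ((r : ZMod q)) ^ c.val ≠ ((r : ZMod q)) ^ c'.val)
    (hr0 : ∀ q : ℕ, q.Prime → q ∣ m → (r : ZMod q) ≠ 0) :
    ∀ n : ℕ, ∀ dm : ℕ, dm * n = m → ∀ toks : Multiset (Tok φ y dm),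
      n ≤ wsum toks → ∃ T : Multiset G, T ≤ msum toks ∧ T ≠ 0 ∧ (1 : G) ∈ piSet T := by
  classical
  intro n
  induction n using Nat.strong_induction_on with
  | _ n ih =>
  intro dm hdm toks hw
  have hn0 : 1 ≤ n := by
    rcases Nat.eq_zero_or_pos n with rfl | h
    · exfalso; rw [mul_zero] at hdm; omega
    · exact h
  by_cases hdone : ∃ t ∈ toks, n ∣ t.V
  · obtain ⟨t, ht, k, hk⟩ := hdone
    refine ⟨(t.l : Multiset G), le_msum_of_mem ht, ?_, ?_⟩
    · simpa using t.hne
    · refine ⟨t.l, rfl, ?_⟩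
      rw [t.hprod, hk, show dm * (n * k) = m * k by rw [← hdm]; ring]
      rw [pow_mul, ← hoy, pow_orderOf_eq_one, one_pow]
  · push_neg at hdone
    have hn2 : 2 ≤ n := by
      rcases Nat.lt_or_ge n 2 with h | h
      · interval_cases n
        exfalso
        have htoks0 : toks ≠ 0 := by
          intro h0; rw [h0] at hw; simp [wsum] at hw
        obtain ⟨t, ht⟩ := Multiset.exists_mem_of_ne_zero htoks0
        exact hdone t ht (one_dvd _)
      · exact h
    set q := n.minFac with hqdef
    have hqp : q.Prime := Nat.minFac_prime (by omega)
    have hqd : q ∣ n := Nat.minFac_dvd n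
    haveI : Fact q.Prime := ⟨hqp⟩
    have hq2 : 2 ≤ q := hqp.two_le
    set n' := n / q with hn'def
    have hqn' : q * n' = n := Nat.mul_div_cancel' hqd
    have hn'1 : 1 ≤ n' := (Nat.one_le_div_iff (by omega)).2 (Nat.le_of_dvd (by omega) hqd)
    have hn'lt : n' < n := Nat.div_lt_self (by omega) (by omega)
    have hnm : n ∣ m := ⟨dm, by rw [← hdm]; ring⟩
    have hqm : q ∣ m := hqd.trans hnm
    haveI : NeZero q := ⟨by omega⟩
    set dead := toks.filter (fun t => q ∣ t.V) with hdead
    set live := toks.filter (fun t => ¬ q ∣ t.V) with hlive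
    have hsplit : dead + live = toks := Multiset.filter_add_not _ _
    have hwsplit : wsum dead + wsum live = wsum toks := by rw [← wsum_add, hsplit]
    have hmsplit : msum dead + msum live = msum toks := by rw [← msum_add, hsplit]
    have hdm' : (dm * q) * n' = m := by rw [mul_assoc, hqn', hdm]
    obtain ⟨dead', hdm_eq, hdw_eq⟩ := descM q (by omega) dead
      (fun t ht => (Multiset.mem_filter.1 ht).2)
    by_cases hWD : n' ≤ wsum dead
    · obtain ⟨T, hT1, hT2, hT3⟩ := ih n' hn'lt (dm * q) hdm' dead' (by rw [hdw_eq]; exact hWD)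
      refine ⟨T, ?_, hT2, hT3⟩
      refine le_trans hT1 ?_
      rw [hdm_eq]
      refine le_trans (msum_mono (Multiset.filter_le _ _)) le_rfl
    · push_neg at hWD
      have hlive_prop : ∀ t ∈ live, (t.V : ZMod q) ≠ 0 := by
        intro t ht h0
        exact (Multiset.mem_filter.1 ht).2 ((ZMod.natCast_eq_zero_iff _ _).1 h0)
      obtain ⟨out, hout_dead, hout_m, hout_w⟩ :=
        phase (q := q) (r := r) hq2 hφ hconj (hdist q hqp hqm) (hr0 q hqp hqm)
          (Multiset.card live) live le_rfl hlive_prop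
      obtain ⟨out', hom_eq, how_eq⟩ := descM q (by omega) out
        (fun t ht => (ZMod.natCast_eq_zero_iff _ _).1 (hout_dead t ht))
      have harith : n' ≤ wsum dead + wsum out := by
        by_contra hcon
        push_neg at hcon
        have h1 : wsum dead + wsum out + 1 ≤ n' := hcon
        have h2 : q * (wsum dead + wsum out + 1) ≤ q * n' := Nat.mul_le_mul_left _ h1
        have h3 : q * (wsum dead + wsum out + 1)
            = q * wsum dead + q * wsum out + q := by ring
        have h4 : wsum dead ≤ q * wsum dead := Nat.le_mul_of_pos_left _ (by omega)
        omega
      obtain ⟨T, hT1, hT2, hT3⟩ := ih n' hn'lt (dm * q) hdm' (dead' + out') (by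
        rw [wsum_add, hdw_eq, how_eq]; exact harith)
      refine ⟨T, ?_, hT2, hT3⟩
      refine le_trans hT1 ?_
      rw [msum_add, hdm_eq, hom_eq]
      refine le_trans (add_le_add_right hout_m _) ?_
      rw [hmsplit]

end Core


section TopLevel
variable {r m : ℕ}

lemma coe_take_drop_le (X : Multiset G) (i k : ℕ) :
    (↑((X.toList.drop i).take k) : Multiset G) ≤ X := by
  have hsub : ((X.toList.drop i).take k).Sublist X.toList :=
    (List.take_sublist _ _).trans (List.drop_sublist _ _)
  calc (↑((X.toList.drop i).take k) : Multiset G) ≤ ↑X.toList := hsub.subperm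
    _ = X := Multiset.coe_toList X

lemma segment_block (X : Multiset G) {i j : ℕ} (hij : i < j) (hj : j ≤ X.toList.length)
    (heq : psum φ X.toList i = psum φ X.toList j) :
    ∃ B ≤ X, B ≠ 0 ∧ (B.map φ).sum = 0 ∧ Multiset.card B < Multiset.card X + 1 := by
  set l := X.toList with hl
  refine ⟨↑((l.drop i).take (j - i)), coe_take_drop_le X i (j - i), ?_, ?_, ?_⟩
  · rw [Ne, Multiset.coe_eq_zero, ← List.length_eq_zero_iff]
    rw [List.length_take, List.length_drop]
    omega
  · have hseg := segment_sum φ l i j hij.le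
    rw [heq] at hseg
    have := add_left_cancel (a := psum φ l j)
      (by rw [hseg]; exact (add_zero _).symm :
        psum φ l j + (((l.drop i).take (j - i)).map φ).sum = psum φ l j + 0)
    exact this
  · have : Multiset.card (↑((l.drop i).take (j - i)) : Multiset G) ≤ Multiset.card X := by
      rw [Multiset.coe_card, List.length_take, List.length_drop]
      have : l.length = Multiset.card X := by rw [hl, Multiset.length_toList]
      omega
    omega

/-- among any `p` elements there is a nonempty zero-sum sub-multiset. -/
lemma exists_zero_block (hp : 0 < p) (X : Multiset G) (hcard : p ≤ Multiset.card X) :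
    ∃ B ≤ X, B ≠ 0 ∧ (B.map φ).sum = 0 := by
  classical
  haveI : NeZero p := ⟨by omega⟩
  have hlen : p ≤ X.toList.length := by
    rw [Multiset.length_toList]; exact hcard
  have hmaps : ∀ k ∈ Finset.range (p + 1), psum φ X.toList k ∈ (Finset.univ : Finset (ZMod p)) :=
    fun k _ => Finset.mem_univ _
  have hlt : (Finset.univ : Finset (ZMod p)).card < (Finset.range (p + 1)).card := by
    rw [Finset.card_univ, ZMod.card, Finset.card_range]; omega
  obtain ⟨i, hi, j, hj, hij, heq⟩ :=
    Finset.exists_ne_map_eq_of_card_lt_of_maps_to hlt hmaps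
  rw [Finset.mem_range] at hi hj
  rcases lt_or_gt_of_ne hij with h | h
  · obtain ⟨B, h1, h2, h3, _⟩ := segment_block X h (by omega) heq
    exact ⟨B, h1, h2, h3⟩
  · obtain ⟨B, h1, h2, h3, _⟩ := segment_block X h (by omega) heq.symm
    exact ⟨B, h1, h2, h3⟩

/-- a minimal nonempty zero-sum sub-multiset. -/
lemma exists_min_block :
    ∀ (N : ℕ) (B : Multiset G), Multiset.card B ≤ N → B ≠ 0 → (B.map φ).sum = 0 →
    ∃ C ≤ B, C ≠ 0 ∧ (C.map φ).sum = 0 ∧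
      (∀ D ≤ C, D ≠ 0 → (D.map φ).sum = 0 → D = C) := by
  intro N
  induction N with
  | zero =>
    intro B hB hB0 _
    exfalso
    exact hB0 (by rw [← Multiset.card_eq_zero]; omega)
  | succ N ih =>
    intro B hB hB0 hBs
    by_cases hmin : ∀ D ≤ B, D ≠ 0 → (D.map φ).sum = 0 → D = B
    · exact ⟨B, le_rfl, hB0, hBs, hmin⟩
    · push_neg at hmin
      obtain ⟨D, hD1, hD2, hD3, hD4⟩ := hmin
      have hlt : Multiset.card D < Multiset.card B :=
        Multiset.card_lt_card (lt_of_le_of_ne hD1 hD4)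
      obtain ⟨C, h1, h2, h3, h4⟩ := ih D (by omega) hD2 hD3
      exact ⟨C, le_trans h1 hD1, h2, h3, h4⟩

/-- a token out of a minimal block: its weight equals the block size. -/
lemma tok_of_min_block (hker : ∀ g : G, φ g = 0 → ∃ a : ℕ, g = y ^ a)
    (hφ : ∀ g h : G, φ (g * h) = φ g + φ h)
    (C : Multiset G) (hC0 : C ≠ 0) (hCs : (C.map φ).sum = 0)
    (hmin : ∀ D ≤ C, D ≠ 0 → (D.map φ).sum = 0 → D = C) :
    ∃ t : Tok φ y 1, (t.l : Multiset G) = C ∧ t.w = Multiset.card C := by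
  classical
  set l := C.toList with hl
  have hlC : (↑l : Multiset G) = C := Multiset.coe_toList C
  have hlen : l.length = Multiset.card C := by rw [hl, Multiset.length_toList]
  have hlne : l ≠ [] := by
    intro h
    apply hC0
    rw [← hlC, h]; rfl
  have hsum : (l.map φ).sum = 0 := by
    have : (l.map φ : List (ZMod p)).sum = ((C.map φ)).sum := by
      rw [← hlC]; rfl
    rw [this, hCs]
  obtain ⟨a, ha⟩ := hker l.prod (by rw [phi_prod hφ, hsum])
  have hprod : l.prod = y ^ (1 * a) := by rw [one_mul]; exact ha
  refine ⟨⟨l, a, hlne, hsum, hprod⟩, hlC, ?_⟩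
  show (PSset φ l).card = Multiset.card C
  have hinj : Set.InjOn (psum φ l) (Finset.range l.length) := by
    intro i hi j hj hij
    simp only [Finset.coe_range, Set.mem_Iio] at hi hj
    by_contra hne
    -- wlog i < j
    have key : ∀ i j : ℕ, i < j → j < l.length → psum φ l i = psum φ l j → False := by
      intro i j hlt hjlen heq
      have hseg := segment_sum φ l i j hlt.le
      rw [heq] at hseg
      have hzero : (((l.drop i).take (j - i)).map φ).sum = 0 := by
        have := add_left_cancel (a := psum φ l j)
          (by rw [hseg]; exact (add_zero _).symm :
            psum φ l j + (((l.drop i).take (j - i)).map φ).sum = psum φ l j + 0)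
        exact this
      have hle : (↑((l.drop i).take (j - i)) : Multiset G) ≤ C := by
        rw [← hlC]
        exact (((l.drop i).take_sublist _).trans (l.drop_sublist _)).subperm
      have hne0 : (↑((l.drop i).take (j - i)) : Multiset G) ≠ 0 := by
        rw [Ne, Multiset.coe_eq_zero, ← List.length_eq_zero_iff]
        rw [List.length_take, List.length_drop]
        omega
      have := hmin _ hle hne0 hzero
      have hcard := congrArg Multiset.card this
      rw [Multiset.coe_card, List.length_take, List.length_drop, ← hlen] at hcard
      omega
    rcases lt_or_gt_of_ne hne with h | h
    · exact key i j h hj hij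
    · exact key j i h hi hij.symm
  rw [PSset, Finset.card_image_of_injOn hinj, Finset.card_range, hlen]

/-- greedy extraction of blocks. -/
lemma blocks_greedy (hp : 0 < p)
    (hker : ∀ g : G, φ g = 0 → ∃ a : ℕ, g = y ^ a)
    (hφ : ∀ g h : G, φ (g * h) = φ g + φ h) :
    ∀ (N : ℕ) (X : Multiset G), Multiset.card X ≤ N →
    ∃ toks : Multiset (Tok φ y 1), msum toks ≤ X ∧ Multiset.card X ≤ wsum toks + (p - 1) := by
  classical
  intro N
  induction N with
  | zero =>
    intro X hX
    refine ⟨0, by rw [show msum (0 : Multiset (Tok φ y 1)) = 0 from rfl]; exact Multiset.zero_le _, ?_⟩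
    rw [show wsum (0 : Multiset (Tok φ y 1)) = 0 from rfl]
    omega
  | succ N ih =>
    intro X hX
    by_cases hsmall : Multiset.card X ≤ p - 1
    · refine ⟨0, by rw [show msum (0 : Multiset (Tok φ y 1)) = 0 from rfl]; exact Multiset.zero_le _, ?_⟩
      rw [show wsum (0 : Multiset (Tok φ y 1)) = 0 from rfl]
      omega
    · have hcard : p ≤ Multiset.card X := by omega
      obtain ⟨B, hB1, hB2, hB3⟩ := exists_zero_block hp X hcard
      obtain ⟨C, hC1, hC2, hC3, hC4⟩ :=
        exists_min_block (Multiset.card B) B le_rfl hB2 hB3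
      obtain ⟨t, htl, htw⟩ := tok_of_min_block hker hφ C hC2 hC3 hC4
      have hCX : C ≤ X := le_trans hC1 hB1
      have hCcard : 1 ≤ Multiset.card C := by
        rw [Nat.one_le_iff_ne_zero, Ne, Multiset.card_eq_zero]; exact hC2
      obtain ⟨toks', h1, h2⟩ := ih (X - C) (by
        have := Multiset.card_le_card hCX
        rw [Multiset.card_sub hCX]
        omega)
      refine ⟨t ::ₘ toks', ?_, ?_⟩
      · rw [msum_cons, htl]
        have : C + (X - C) = X := by
          rw [add_comm]; exact tsub_add_cancel_of_le hCX
        calc C + msum toks' ≤ C + (X - C) := add_le_add_right h1 _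
          _ = X := this
      · rw [wsum_cons, htw]
        have hXC : Multiset.card (X - C) = Multiset.card X - Multiset.card C :=
          Multiset.card_sub hCX
        have := Multiset.card_le_card hCX
        omega

/-- build singleton tokens from the kernel elements. -/
lemma singles_toks (hker : ∀ g : G, φ g = 0 → ∃ a : ℕ, g = y ^ a) :
    ∀ (SH : Multiset G), (∀ g ∈ SH, φ g = 0) →
    ∃ toks : Multiset (Tok φ y 1), msum toks = SH ∧ wsum toks = Multiset.card SH := by
  intro SH
  induction SH using Multiset.induction with
  | empty => exact fun _ => ⟨0, rfl, rfl⟩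
  | cons g SH ih =>
    intro hmem
    obtain ⟨toks', h1, h2⟩ := ih (fun g' hg' => hmem g' (Multiset.mem_cons_of_mem hg'))
    have hg : φ g = 0 := hmem g (Multiset.mem_cons_self g SH)
    obtain ⟨a, ha⟩ := hker g hg
    have hsum : ([g].map φ).sum = 0 := by simp [hg]
    have hprod : [g].prod = y ^ (1 * a) := by rw [one_mul]; simpa using ha
    set t : Tok φ y 1 := ⟨[g], a, by simp, hsum, hprod⟩ with htdef
    have htw : t.w = 1 := by
      show (PSset φ [g]).card = 1
      rw [PSset]
      simp
    refine ⟨t ::ₘ toks', ?_, ?_⟩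
    · rw [msum_cons, h1]
      rfl
    · rw [wsum_cons, htw, h2]
      simp [add_comm]

/-- The combinatorial engine. -/
theorem engine (hp : p.Prime) (hm : 0 < m) (hoy : orderOf y = m)
    (hφ : ∀ g h : G, φ (g * h) = φ g + φ h)
    (hker : ∀ g : G, φ g = 0 → ∃ a : ℕ, g = y ^ a)
    (hconj : ∀ (g : G) (a : ℕ), g⁻¹ * y ^ a * g = y ^ (a * r ^ (φ g).val))
    (hdist : ∀ q : ℕ, q.Prime → q ∣ m → ∀ c c' : ZMod p, c ≠ c' →
        ((r : ZMod q)) ^ c.val ≠ ((r : ZMod q)) ^ c'.val)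
    (hr0 : ∀ q : ℕ, q.Prime → q ∣ m → (r : ZMod q) ≠ 0) :
    ∀ S : Multiset G, Multiset.card S = m + p - 1 → (1 : G) ∈ subProds S := by
  classical
  intro S hS
  set SH := S.filter (fun g => φ g = 0) with hSH
  set SX := S.filter (fun g => ¬ φ g = 0) with hSX
  have hsplit : SH + SX = S := Multiset.filter_add_not _ _
  have hcards : Multiset.card SH + Multiset.card SX = m + p - 1 := by
    rw [← hS, ← hsplit]; simp
  obtain ⟨toks1, ht1m, ht1w⟩ := singles_toks hker SH
    (fun g hg => (Multiset.mem_filter.1 hg).2)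
  obtain ⟨toks2, ht2m, ht2w⟩ := blocks_greedy hp.pos hker hφ (Multiset.card SX) SX le_rfl
  have hwtot : m ≤ wsum (toks1 + toks2) := by
    rw [wsum_add, ht1w]
    have hp1 : 1 ≤ p := hp.pos
    omega
  obtain ⟨T, hT1, hT2, hT3⟩ := core hm hoy hφ hconj hdist hr0 m 1 (one_mul m)
    (toks1 + toks2) hwtot
  refine ⟨T, ?_, hT2, hT3⟩
  refine le_trans hT1 ?_
  rw [msum_add, ht1m]
  calc SH + msum toks2 ≤ SH + SX := add_le_add_right ht2m _
    _ = S := hsplit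

end TopLevel

section GroupStruct
variable {p m r : ℕ} {G : Type*} [Group G] {x y : G}

lemma conj_y_pow (hrel : x⁻¹ * y * x = y ^ r) (a : ℕ) :
    x⁻¹ * y ^ a * x = y ^ (a * r) := by
  induction a with
  | zero => simp
  | succ a ih =>
    calc x⁻¹ * y ^ (a + 1) * x = (x⁻¹ * y ^ a * x) * (x⁻¹ * y * x) := by
          rw [pow_succ]; group
      _ = y ^ (a * r) * y ^ r := by rw [ih, hrel]
      _ = y ^ ((a + 1) * r) := by rw [← pow_add]; ring_nf

lemma conj_y_pow_k (hrel : x⁻¹ * y * x = y ^ r) (k a : ℕ) :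
    (x ^ k)⁻¹ * y ^ a * x ^ k = y ^ (a * r ^ k) := by
  induction k generalizing a with
  | zero => simp
  | succ k ih =>
    have h1 : (x ^ (k + 1))⁻¹ * y ^ a * x ^ (k + 1)
        = x⁻¹ * ((x ^ k)⁻¹ * y ^ a * x ^ k) * x := by
      rw [pow_succ]
      group
    rw [h1, ih a, conj_y_pow hrel, pow_succ]
    ring_nf

lemma r_pow_p_modeq (hrel : x⁻¹ * y * x = y ^ r) (hox : orderOf x = p) (hoy : orderOf y = m) :
    r ^ p ≡ 1 [MOD m] := by
  have h := conj_y_pow_k hrel p 1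
  have hx1 : x ^ p = 1 := by rw [← hox]; exact pow_orderOf_eq_one x
  rw [hx1] at h
  simp only [inv_one, one_mul, mul_one, one_mul] at h
  have h3 : y ^ (r ^ p) = y ^ 1 := by simpa using h.symm
  have h4 := (pow_eq_pow_iff_modEq).1 h3
  rw [hoy] at h4
  exact h4

lemma cop_pm (hm : 0 < m) (hgcd : Nat.gcd (p * (r - 1)) m = 1) : Nat.Coprime p m := by
  have h : Nat.gcd p m ∣ Nat.gcd (p * (r - 1)) m :=
    Nat.dvd_gcd ((Nat.gcd_dvd_left p m).trans (dvd_mul_right p (r - 1))) (Nat.gcd_dvd_right p m)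
  rw [hgcd] at h
  exact Nat.dvd_one.1 h

lemma x_pow_p_sub_one (hp : 0 < p) (hox : orderOf x = p) : x ^ (p - 1) = x⁻¹ := by
  have h : x * x ^ (p - 1) = 1 := by
    rw [← pow_succ', Nat.sub_add_cancel hp, ← hox, pow_orderOf_eq_one]
  exact eq_inv_of_mul_eq_one_right h

lemma conj_pos (hp : 0 < p) (hox : orderOf x = p) (hrel : x⁻¹ * y * x = y ^ r) (b a : ℕ) :
    x ^ b * y ^ a * (x ^ b)⁻¹ = y ^ (a * (r ^ (p - 1)) ^ b) := by
  induction b generalizing a with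
  | zero => simp
  | succ b ih =>
    have h1 : x ^ (b + 1) * y ^ a * (x ^ (b + 1))⁻¹
        = x * (x ^ b * y ^ a * (x ^ b)⁻¹) * x⁻¹ := by
      rw [pow_succ']
      group
    have hbase : ∀ c : ℕ, x * y ^ c * x⁻¹ = y ^ (c * r ^ (p - 1)) := by
      intro c
      have := conj_y_pow_k hrel (p - 1) c
      rw [x_pow_p_sub_one hp hox] at this
      simpa using this
    rw [h1, ih a, hbase, pow_succ]
    ring_nf

/-- every element decomposes. -/
lemma decomp (hp : 0 < p) (hm : 0 < m) (hox : orderOf x = p) (hoy : orderOf y = m)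
    (hrel : x⁻¹ * y * x = y ^ r)
    (hgen : Subgroup.closure ({x, y} : Set G) = ⊤) (g : G) :
    ∃ a b : ℕ, g = y ^ a * x ^ b := by
  set s := r ^ (p - 1) with hs
  have hswap : ∀ b c : ℕ, x ^ b * y ^ c = y ^ (c * s ^ b) * x ^ b := by
    intro b c
    have := conj_pos hp hox hrel b c
    calc x ^ b * y ^ c = (x ^ b * y ^ c * (x ^ b)⁻¹) * x ^ b := by group
      _ = y ^ (c * s ^ b) * x ^ b := by rw [this]
  set Sg : Subgroup G :=
    { carrier := {g | ∃ a b : ℕ, g = y ^ a * x ^ b}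
      one_mem' := ⟨0, 0, by simp⟩
      mul_mem' := by
        rintro g h ⟨a, b, rfl⟩ ⟨c, d, rfl⟩
        refine ⟨a + c * s ^ b, b + d, ?_⟩
        calc y ^ a * x ^ b * (y ^ c * x ^ d)
            = y ^ a * (x ^ b * y ^ c) * x ^ d := by group
          _ = y ^ a * (y ^ (c * s ^ b) * x ^ b) * x ^ d := by rw [hswap]
          _ = y ^ (a + c * s ^ b) * x ^ (b + d) := by rw [pow_add, pow_add]; group
      inv_mem' := by
        rintro g ⟨a, b, rfl⟩
        refine ⟨a * (m - 1) * s ^ (b * (p - 1)), b * (p - 1), ?_⟩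
        have hxinv : (x ^ b)⁻¹ = x ^ (b * (p - 1)) := by
          have hadd : b * (p - 1) + b = b * p := by
            have hp1 : p - 1 + 1 = p := Nat.sub_add_cancel hp
            calc b * (p - 1) + b = b * ((p - 1) + 1) := by ring
              _ = b * p := by rw [hp1]
          have h1 : x ^ (b * (p - 1)) * x ^ b = 1 := by
            rw [← pow_add, hadd, mul_comm b p, pow_mul, ← hox, pow_orderOf_eq_one, one_pow]
          exact (eq_inv_of_mul_eq_one_left h1).symm
        have hyinv : (y ^ a)⁻¹ = y ^ (a * (m - 1)) := by
          have hadd : a * (m - 1) + a = a * m := by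
            have hm1 : m - 1 + 1 = m := Nat.sub_add_cancel hm
            calc a * (m - 1) + a = a * ((m - 1) + 1) := by ring
              _ = a * m := by rw [hm1]
          have h1 : y ^ (a * (m - 1)) * y ^ a = 1 := by
            rw [← pow_add, hadd, mul_comm a m, pow_mul, ← hoy, pow_orderOf_eq_one, one_pow]
          exact (eq_inv_of_mul_eq_one_left h1).symm
        calc (y ^ a * x ^ b)⁻¹ = (x ^ b)⁻¹ * (y ^ a)⁻¹ := by group
          _ = x ^ (b * (p - 1)) * y ^ (a * (m - 1)) := by rw [hxinv, hyinv]
          _ = y ^ (a * (m - 1) * s ^ (b * (p - 1))) * x ^ (b * (p - 1)) := by rw [hswap] } with hSg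
  have hxmem : x ∈ Sg := ⟨0, 1, by simp⟩
  have hymem : y ∈ Sg := ⟨1, 0, by simp⟩
  have : Subgroup.closure ({x, y} : Set G) ≤ Sg := by
    rw [Subgroup.closure_le]
    rintro g (rfl | rfl)
    · exact hxmem
    · exact hymem
  rw [hgen] at this
  exact this (Subgroup.mem_top g)

/-- uniqueness of the `x`-exponent modulo `p`. -/
lemma unique_b (hp : 0 < p) (hm : 0 < m) (hox : orderOf x = p) (hoy : orderOf y = m)
    (hcop : Nat.Coprime p m) {a b c d : ℕ}
    (h : y ^ a * x ^ b = y ^ c * x ^ d) : x ^ b = x ^ d ∧ y ^ a = y ^ c := by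
  have hw : (y ^ c)⁻¹ * y ^ a = x ^ d * (x ^ b)⁻¹ := by
    calc (y ^ c)⁻¹ * y ^ a = (y ^ c)⁻¹ * (y ^ a * x ^ b) * (x ^ b)⁻¹ := by group
      _ = (y ^ c)⁻¹ * (y ^ c * x ^ d) * (x ^ b)⁻¹ := by rw [h]
      _ = x ^ d * (x ^ b)⁻¹ := by group
  have e1 : (y ^ c)⁻¹ * y ^ a = y ^ ((a : ℤ) - (c : ℤ)) := by group
  have e2 : x ^ d * (x ^ b)⁻¹ = x ^ ((d : ℤ) - (b : ℤ)) := by group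
  have hym : (y : G) ^ m = 1 := by rw [← hoy]; exact pow_orderOf_eq_one y
  have hxp : (x : G) ^ p = 1 := by rw [← hox]; exact pow_orderOf_eq_one x
  have hwm : ((y ^ c)⁻¹ * y ^ a) ^ m = 1 := by
    rw [e1, ← zpow_natCast (y ^ ((a : ℤ) - (c : ℤ))) m, ← zpow_mul, mul_comm, zpow_mul,
      zpow_natCast, hym, one_zpow]
  have hwp : ((y ^ c)⁻¹ * y ^ a) ^ p = 1 := by
    rw [hw, e2, ← zpow_natCast (x ^ ((d : ℤ) - (b : ℤ))) p, ← zpow_mul, mul_comm, zpow_mul,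
      zpow_natCast, hxp, one_zpow]
  have h1 : orderOf ((y ^ c)⁻¹ * y ^ a) ∣ m := orderOf_dvd_of_pow_eq_one hwm
  have h2 : orderOf ((y ^ c)⁻¹ * y ^ a) ∣ p := orderOf_dvd_of_pow_eq_one hwp
  have hdvd1 : orderOf ((y ^ c)⁻¹ * y ^ a) ∣ 1 := by
    rw [← hcop]
    exact Nat.dvd_gcd h2 h1
  have hw1 : (y ^ c)⁻¹ * y ^ a = 1 := orderOf_eq_one_iff.1 (Nat.dvd_one.1 hdvd1)
  constructor
  · have hx1 : x ^ d * (x ^ b)⁻¹ = 1 := by rw [← hw, hw1]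
    have := mul_inv_eq_one.1 hx1
    exact this.symm
  · have := inv_mul_eq_one.1 hw1
    exact this.symm

lemma hr0_lemma (hp : p.Prime) (hrp : r ^ p ≡ 1 [MOD m]) :
    ∀ q : ℕ, q.Prime → q ∣ m → (r : ZMod q) ≠ 0 := by
  intro q hq hqm h0
  haveI := Fact.mk hq
  have h1 : r ^ p ≡ 1 [MOD q] := Nat.ModEq.of_dvd hqm hrp
  have h2 : ((r : ZMod q)) ^ p = 1 := by
    have h3 := (ZMod.natCast_eq_natCast_iff _ _ _).2 h1
    push_cast at h3
    exact h3
  rw [h0, zero_pow (by have := hp.pos; omega : p ≠ 0)] at h2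
  exact zero_ne_one h2

lemma hdist_lemma (hp : p.Prime) (hr : 0 < r) (hgcd : Nat.gcd (p * (r - 1)) m = 1)
    (hrp : r ^ p ≡ 1 [MOD m]) :
    ∀ q : ℕ, q.Prime → q ∣ m → ∀ c c' : ZMod p, c ≠ c' →
      ((r : ZMod q)) ^ c.val ≠ ((r : ZMod q)) ^ c'.val := by
  intro q hq hqm c c' hne heq
  haveI := Fact.mk hq
  haveI : NeZero p := ⟨hp.pos.ne'⟩
  have hu0 : (r : ZMod q) ≠ 0 := hr0_lemma hp hrp q hq hqm
  have hup : ((r : ZMod q)) ^ p = 1 := by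
    have h1 : r ^ p ≡ 1 [MOD q] := Nat.ModEq.of_dvd hqm hrp
    have h3 := (ZMod.natCast_eq_natCast_iff _ _ _).2 h1
    push_cast at h3
    exact h3
  have aux : ∀ i j : ℕ, i < j → j < p → ((r : ZMod q)) ^ i = ((r : ZMod q)) ^ j →
      (r : ZMod q) = 1 := by
    intro i j hij hjp he
    have h1 : ((r : ZMod q)) ^ i * ((r : ZMod q)) ^ (j - i) = ((r : ZMod q)) ^ i * 1 := by
      rw [mul_one, ← pow_add, Nat.add_sub_cancel' hij.le]
      exact he.symm
    have hd : ((r : ZMod q)) ^ (j - i) = 1 := mul_left_cancel₀ (pow_ne_zero i hu0) h1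
    have ho1 : orderOf ((r : ZMod q)) ∣ (j - i) := orderOf_dvd_of_pow_eq_one hd
    have ho2 : orderOf ((r : ZMod q)) ∣ p := orderOf_dvd_of_pow_eq_one hup
    rcases (Nat.Prime.eq_one_or_self_of_dvd hp _ ho2) with h1 | h1
    · exact orderOf_eq_one_iff.1 h1
    · exfalso
      rw [h1] at ho1
      have := Nat.le_of_dvd (by omega) ho1
      omega
  have hvne : c.val ≠ c'.val := by
    intro h
    apply hne
    have h1 : ((c.val : ℕ) : ZMod p) = c := ZMod.natCast_rightInverse c
    have h2 : ((c'.val : ℕ) : ZMod p) = c' := ZMod.natCast_rightInverse c'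
    rw [← h1, ← h2, h]
  have key : (r : ZMod q) = 1 := by
    rcases lt_or_gt_of_ne hvne with h | h
    · exact aux _ _ h (ZMod.val_lt c') heq
    · exact aux _ _ h (ZMod.val_lt c) heq.symm
  have hdvd : q ∣ r - 1 := by
    have h1 : (r : ZMod q) = ((1 : ℕ) : ZMod q) := by rw [key]; simp
    have hmod := (ZMod.natCast_eq_natCast_iff _ _ _).1 h1
    exact (Nat.modEq_iff_dvd' hr).1 hmod.symm
  have hq1 : q ∣ 1 := by
    rw [← hgcd]
    exact Nat.dvd_gcd (hdvd.trans (dvd_mul_left _ _)) hqm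
  have := hq.two_le
  have := Nat.le_of_dvd one_pos hq1
  omega

lemma exists_phi (hp : p.Prime) (hm : 0 < m) (hox : orderOf x = p) (hoy : orderOf y = m)
    (hrel : x⁻¹ * y * x = y ^ r)
    (hgen : Subgroup.closure ({x, y} : Set G) = ⊤)
    (hgcd : Nat.gcd (p * (r - 1)) m = 1) :
    ∃ φ : G → ZMod p,
      (∀ g h : G, φ (g * h) = φ g + φ h) ∧
      (∀ g : G, φ g = 0 → ∃ a : ℕ, g = y ^ a) ∧
      (∀ (g : G) (a : ℕ), g⁻¹ * y ^ a * g = y ^ (a * r ^ (φ g).val)) := by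
  classical
  have hp0 : 0 < p := hp.pos
  have hcop := cop_pm (r := r) hm hgcd
  haveI : NeZero p := ⟨by omega⟩
  have hrp := r_pow_p_modeq hrel hox hoy
  choose A B hAB using decomp hp0 hm hox hoy hrel hgen
  refine ⟨fun g => (B g : ZMod p), ?_, ?_, ?_⟩
  case _ =>
    -- homomorphism
    intro g h
    have hswap : ∀ b c : ℕ, x ^ b * y ^ c = y ^ (c * (r ^ (p - 1)) ^ b) * x ^ b := by
      intro b c
      have hcp := conj_pos hp0 hox hrel b c
      calc x ^ b * y ^ c = (x ^ b * y ^ c * (x ^ b)⁻¹) * x ^ b := by group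
        _ = y ^ (c * (r ^ (p - 1)) ^ b) * x ^ b := by rw [hcp]
    have hgh : g * h = y ^ (A g + A h * (r ^ (p - 1)) ^ (B g)) * x ^ (B g + B h) := by
      calc g * h = (y ^ A g * x ^ B g) * (y ^ A h * x ^ B h) := by rw [← hAB g, ← hAB h]
        _ = y ^ A g * (x ^ B g * y ^ A h) * x ^ B h := by group
        _ = y ^ A g * (y ^ (A h * (r ^ (p - 1)) ^ (B g)) * x ^ B g) * x ^ B h := by rw [hswap]
        _ = y ^ (A g + A h * (r ^ (p - 1)) ^ (B g)) * x ^ (B g + B h) := by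
            rw [pow_add, pow_add]; group
    have h1 := unique_b hp0 hm hox hoy hcop ((hAB (g * h)).symm.trans hgh)
    have hmod := (pow_eq_pow_iff_modEq).1 h1.1
    rw [hox] at hmod
    show ((B (g * h) : ℕ) : ZMod p) = ((B g : ℕ) : ZMod p) + ((B h : ℕ) : ZMod p)
    rw [← Nat.cast_add, ZMod.natCast_eq_natCast_iff]
    exact hmod
  case _ =>
    -- kernel
    intro g hg
    have hg' : ((B g : ℕ) : ZMod p) = 0 := hg
    have hdvd : p ∣ B g := (ZMod.natCast_eq_zero_iff (B g) p).1 hg'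
    obtain ⟨k, hk⟩ := hdvd
    refine ⟨A g, ?_⟩
    conv_lhs => rw [hAB g]
    rw [hk, pow_mul, ← hox, pow_orderOf_eq_one, one_pow, mul_one]
  case _ =>
    -- conjugation
    intro g a
    show g⁻¹ * y ^ a * g = y ^ (a * r ^ ((B g : ZMod p)).val)
    have hg := hAB g
    set b := B g with hbdef
    set c := A g with hcdef
    have h1 : g⁻¹ * y ^ a * g = (x ^ b)⁻¹ * y ^ a * x ^ b := by
      rw [hg]
      group
    rw [h1, conj_y_pow_k hrel b a]
    -- now adjust the exponent modulo p
    have hval : ((b : ZMod p)).val = b % p := ZMod.val_natCast p b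
    have hmod : a * r ^ b ≡ a * r ^ (b % p) [MOD m] := by
      have hd : b = p * (b / p) + b % p := (Nat.div_add_mod _ _).symm
      have h2 : r ^ b = (r ^ p) ^ (b / p) * r ^ (b % p) := by
        conv_lhs => rw [hd]
        rw [pow_add, pow_mul]
      have h3 : (r ^ p) ^ (b / p) * r ^ (b % p) ≡ 1 ^ (b / p) * r ^ (b % p) [MOD m] :=
        Nat.ModEq.mul (Nat.ModEq.pow _ hrp) (Nat.ModEq.refl _)
      have h4 : r ^ b ≡ r ^ (b % p) [MOD m] := by
        rw [h2]
        simpa using h3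
      exact Nat.ModEq.mul_left a h4
    have h5 : y ^ (a * r ^ b) = y ^ (a * r ^ (b % p)) := by
      rw [pow_eq_pow_iff_modEq, hoy]
      exact hmod
    rw [h5, hval]

end GroupStruct

end S9

theorem stmt_9 (p m r : ℕ) (G : Type*) [Group G] [Fintype G] (x y : G)
    (hp : p.Prime) (hm : 0 < m) (hr : 0 < r)
    (hcard : Fintype.card G = p * m)
    (hox : orderOf x = p) (hoy : orderOf y = m)
    (hrel : x⁻¹ * y * x = y ^ r)
    (hgen : Subgroup.closure ({x, y} : Set G) = ⊤)
    (hpmin : ∀ q : ℕ, q.Prime → q ∣ p * m → p ≤ q)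
    (hgcd : Nat.gcd (p * (r - 1)) m = 1) :
    (∀ S : Multiset G, Multiset.card S = m + p - 1 → (1 : G) ∈ subProds S) ∧
      dG G ≤ m + p - 2 := by
  obtain ⟨φ, hφ, hker, hconj⟩ := S9.exists_phi hp hm hox hoy hrel hgen hgcd
  have hrp := S9.r_pow_p_modeq hrel hox hoy
  have hdist := S9.hdist_lemma hp hr hgcd hrp
  have hr0 := S9.hr0_lemma hp hrp
  have part1 : ∀ S : Multiset G, Multiset.card S = m + p - 1 → (1 : G) ∈ subProds S :=
    S9.engine hp hm hoy hφ hker hconj hdist hr0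
  refine ⟨part1, ?_⟩
  have hub : ∀ n ∈ {n | ∃ S : Multiset G, Multiset.card S = n ∧ (1 : G) ∉ subProds S},
      n ≤ m + p - 2 := by
    rintro n ⟨S, hcards, hfree⟩
    by_contra hgt
    push_neg at hgt
    have hp2 := hp.two_le
    have hge : m + p - 1 ≤ n := by omega
    set T : Multiset G := ((S.toList.take (m + p - 1) : List G) : Multiset G) with hT
    have hTle : T ≤ S := by
      calc T ≤ (S.toList : Multiset G) := (List.take_sublist _ _).subperm
        _ = S := Multiset.coe_toList S
    have hTcard : Multiset.card T = m + p - 1 := by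
      rw [hT, Multiset.coe_card, List.length_take, Multiset.length_toList, hcards]
      omega
    obtain ⟨U, hU1, hU2, hU3⟩ := part1 T hTcard
    exact hfree ⟨U, le_trans hU1 hTle, hU2, hU3⟩
  have hne : {n | ∃ S : Multiset G, Multiset.card S = n ∧ (1 : G) ∉ subProds S}.Nonempty := by
    refine ⟨0, 0, rfl, ?_⟩
    rintro ⟨U, hU1, hU2, _⟩
    exact hU2 (Multiset.le_zero.1 hU1)
  exact csSup_le hne hub
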